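/- Let p, q be coprime positive integers with |α − p/q| < 1/q². Then for every x ∈ [0,1), the distance (on the circle ℝ/ℤ) between any two consecutive elements of the set { {x + kα} : k = 0, …, q−1 } is strictly less than 2/q. -/

import Mathlib

lemma gridRep (p q : ℕ) (hq : 0 < q) (hcop : Nat.Coprime p q) (j : ℤ) :
    ∃ k : ℕ, k < q ∧ ∃ m : ℤ, (k : ℤ) * p - m * q = j := by
  haveI : NeZero q := ⟨hq.ne'⟩
  set u : (ZMod q)ˣ := ZMod.unitOfCoprime p hcop with hu
  set k : ℕ := (((u⁻¹ : (ZMod q)ˣ) : ZMod q) * (j : ZMod q)).val with hk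
  have hkq : k < q := ZMod.val_lt _
  have hz : (((k : ℤ) * p - j : ℤ) : ZMod q) = 0 := by
    push_cast
    rw [hk, ZMod.natCast_val, ZMod.cast_id]
    have hup : ((u : ZMod q)) = (p : ZMod q) := ZMod.coe_unitOfCoprime p hcop
    rw [← hup, mul_comm ((u⁻¹ : (ZMod q)ˣ) : ZMod q) _, mul_assoc]
    simp
  obtain ⟨m, hm⟩ := (ZMod.intCast_zmod_eq_zero_iff_dvd _ _).mp hz
  exact ⟨k, hkq, m, by linarith [hm]⟩

lemma dense2q (α : ℝ) (p q : ℕ) (hq : 0 < q) (hcop : Nat.Coprime p q)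
    (happrox : |α - (p : ℝ) / (q : ℝ)| < 1 / (q : ℝ)^2) (x t : ℝ) :
    ∃ k : ℕ, k < q ∧ ∃ n : ℤ, t < x + (k : ℝ) * α - n ∧ x + (k : ℝ) * α - n < t + 2 / q := by
  have hq0 : (0:ℝ) < q := by exact_mod_cast hq
  set θ : ℝ := α - (p : ℝ) / q with hθdef
  clear_value θ
  have hkθ : ∀ k : ℕ, k < q → |(k : ℝ) * θ| < 1 / q := by
    intro k hk
    have hk1 : (k : ℝ) ≤ (q : ℝ) - 1 := by
      have : (k : ℝ) + 1 ≤ (q : ℝ) := by exact_mod_cast hk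
      linarith
    have hk0 : (0:ℝ) ≤ (k : ℝ) := Nat.cast_nonneg k
    have h1 : |(k : ℝ) * θ| = (k : ℝ) * |θ| := by
      rw [abs_mul, abs_of_nonneg hk0]
    have h2 : (k : ℝ) * |θ| ≤ ((q:ℝ) - 1) * (1 / (q:ℝ)^2) := by
      apply mul_le_mul hk1 (le_of_lt happrox) (abs_nonneg _) (by linarith)
    have h3 : ((q:ℝ) - 1) * (1 / (q:ℝ)^2) < 1 / q := by
      rw [mul_one_div, div_lt_div_iff₀ (by positivity) hq0]
      nlinarith
    linarith [h1, h2, h3]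
  -- grid point helper
  have key : ∀ j : ℤ, ∃ k : ℕ, k < q ∧ ∃ m : ℤ,
      x + (k : ℝ) * α - m = x + (j : ℝ) / q + (k : ℝ) * θ := by
    intro j
    obtain ⟨k, hk, m, hkm⟩ := gridRep p q hq hcop j
    refine ⟨k, hk, m, ?_⟩
    have : ((k : ℝ) * p - m * q : ℝ) = (j : ℝ) := by exact_mod_cast hkm
    field_simp [hθdef]
    rw [hθdef, ← this]; field_simp; ring
  rcases le_or_gt 0 θ with hθ | hθ
  · obtain ⟨k, hk, m, heq⟩ := key (⌊(t - x) * q⌋ + 1)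
    have hkθ' := hkθ k hk
    have hkθnn : 0 ≤ (k : ℝ) * θ := mul_nonneg (Nat.cast_nonneg k) hθ
    have hkθlt : (k : ℝ) * θ < 1 / q := lt_of_abs_lt hkθ'
    have hfl : (t - x) * q < ((⌊(t - x) * q⌋ + 1 : ℤ) : ℝ) := by
      push_cast
      linarith [Int.lt_floor_add_one ((t - x) * q)]
    have hfu : ((⌊(t - x) * q⌋ + 1 : ℤ) : ℝ) ≤ (t - x) * q + 1 := by
      push_cast
      linarith [Int.floor_le ((t - x) * q)]
    refine ⟨k, hk, m, ?_, ?_⟩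
    · rw [heq]
      have : t - x < ((⌊(t - x) * q⌋ + 1 : ℤ) : ℝ) / q := by
        rw [lt_div_iff₀ hq0]; exact_mod_cast hfl
      linarith
    · rw [heq]
      have : ((⌊(t - x) * q⌋ + 1 : ℤ) : ℝ) / q ≤ t - x + 1 / q := by
        rw [div_le_iff₀ hq0]
        have : (t - x + 1 / q) * q = (t - x) * q + 1 := by field_simp
        linarith [hfu, this]
      have h2q : 2 / (q:ℝ) = 1 / q + 1 / q := by ring
      linarith
  · obtain ⟨k, hk, m, heq⟩ := key (⌈(t - x) * q⌉ + 1)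
    have hkθ' := hkθ k hk
    have hkθnp : (k : ℝ) * θ ≤ 0 := mul_nonpos_of_nonneg_of_nonpos (Nat.cast_nonneg k) hθ.le
    have hkθgt : -(1 / (q:ℝ)) < (k : ℝ) * θ := neg_lt_of_abs_lt hkθ'
    have hcl : (t - x) * q + 1 ≤ ((⌈(t - x) * q⌉ + 1 : ℤ) : ℝ) := by
      push_cast
      linarith [Int.le_ceil ((t - x) * q)]
    have hcu : ((⌈(t - x) * q⌉ + 1 : ℤ) : ℝ) < (t - x) * q + 2 := by
      push_cast
      linarith [Int.ceil_lt_add_one ((t - x) * q)]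
    refine ⟨k, hk, m, ?_, ?_⟩
    · rw [heq]
      have : t - x + 1 / q ≤ ((⌈(t - x) * q⌉ + 1 : ℤ) : ℝ) / q := by
        rw [le_div_iff₀ hq0]
        have : (t - x + 1 / q) * q = (t - x) * q + 1 := by field_simp
        linarith
      linarith
    · rw [heq]
      have : ((⌈(t - x) * q⌉ + 1 : ℤ) : ℝ) / q < t - x + 2 / q := by
        rw [div_lt_iff₀ hq0]
        have : (t - x + 2 / q) * q = (t - x) * q + 2 := by field_simp
        linarith
      linarith

theorem stmt4 (α : ℝ) (p q : ℕ) (hp : 0 < p) (hq : 0 < q) (hcop : Nat.Coprime p q)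
    (happrox : |α - (p : ℝ) / (q : ℝ)| < 1 / (q : ℝ)^2)
    (x : ℝ) (hx : x ∈ Set.Ico (0:ℝ) 1)
    (S : Finset ℝ) (hS : S = (Finset.range q).image (fun k : ℕ => Int.fract (x + (k : ℝ) * α))) :
    -- gaps between consecutive elements of S (in increasing order) are < 2/q …
    (∀ u ∈ S, ∀ v ∈ S, u < v → (∀ w ∈ S, ¬ (u < w ∧ w < v)) → v - u < 2 / (q : ℝ)) ∧
    -- … including the wrap-around gap on the circle, from the largest to the smallest element
    (∀ u ∈ S, ∀ v ∈ S, (∀ w ∈ S, w ≤ u) → (∀ w ∈ S, v ≤ w) → (v + 1) - u < 2 / (q : ℝ)) := by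
  subst hS
  have hq0 : (0:ℝ) < q := by exact_mod_cast hq
  have hmem : ∀ w ∈ (Finset.range q).image (fun k : ℕ => Int.fract (x + (k : ℝ) * α)),
      0 ≤ w ∧ w < 1 := by
    intro w hw
    obtain ⟨k, _, hk⟩ := Finset.mem_image.mp hw
    exact hk ▸ ⟨Int.fract_nonneg _, Int.fract_lt_one _⟩
  constructor
  · intro u hu v hv huv hbetween
    by_contra hge
    push_neg at hge
    obtain ⟨k, hk, n, h1, h2⟩ := dense2q α p q hq hcop happrox x u
    set y := x + (k : ℝ) * α - n with hy
    have hyv : y < v := by linarith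
    have hy0 : 0 ≤ y := le_of_lt (lt_of_le_of_lt (hmem u hu).1 h1)
    have hy1 : y < 1 := lt_trans hyv (hmem v hv).2
    have hfr : Int.fract (x + (k : ℝ) * α) = y := by
      have hxy : x + (k : ℝ) * α = y + n := by rw [hy]; ring
      rw [hxy, Int.fract_add_intCast, Int.fract_eq_self.mpr ⟨hy0, hy1⟩]
    have hyS : y ∈ (Finset.range q).image (fun k : ℕ => Int.fract (x + (k : ℝ) * α)) :=
      Finset.mem_image.mpr ⟨k, Finset.mem_range.mpr hk, hfr⟩
    exact hbetween y hyS ⟨h1, hyv⟩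
  · intro u hu v hv hmax hmin
    by_contra hge
    push_neg at hge
    obtain ⟨k, hk, n, h1, h2⟩ := dense2q α p q hq hcop happrox x u
    set w := Int.fract (x + (k : ℝ) * α) with hw
    have hwS : w ∈ (Finset.range q).image (fun k : ℕ => Int.fract (x + (k : ℝ) * α)) :=
      Finset.mem_image.mpr ⟨k, Finset.mem_range.mpr hk, rfl⟩
    have hwu : w ≤ u := hmax w hwS
    have hvw : v ≤ w := hmin w hwS
    have hdeq : x + (k : ℝ) * α - n = w + ((⌊x + (k : ℝ) * α⌋ - n : ℤ) : ℝ) := by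
      show x + (k : ℝ) * α - n = Int.fract (x + (k : ℝ) * α) + ((⌊x + (k : ℝ) * α⌋ - n : ℤ) : ℝ)
      rw [Int.fract]
      push_cast
      ring
    set d : ℤ := ⌊x + (k : ℝ) * α⌋ - n with hd
    rw [hdeq] at h1 h2
    have hd1 : (1:ℝ) ≤ (d : ℝ) := by
      have : (0:ℤ) < d := by exact_mod_cast (by linarith : (0:ℝ) < (d:ℝ))
      exact_mod_cast this
    linarith
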